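/- For every n ≥ 1, the deterministic u-query complexity of MUX_n equals 2^n + n; that is, the minimum depth of a ternary decision tree computing the hazard-free extension of MUX_n is exactly 2^n + n. -/

import Mathlib

attribute [local instance 0] Classical.propDecidable

/-- Ternary values: `none` represents the uncertain value `u`,
`some b` represents the Boolean value `b`. -/
abbrev TVal := Option Bool

/-- The resolutions of `x ∈ {0,u,1}^ι`: all Boolean strings agreeing with
the determined coordinates of `x`. -/
def Res {ι : Type} (x : ι → Option Bool) : Set (ι → Bool) :=
  {y | ∀ i b, x i = some b → y i = b}

/-- The hazard-free extension of a Boolean function `f`. -/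
noncomputable def hfext {ι : Type} (f : (ι → Bool) → Bool) (x : ι → Option Bool) :
    Option Bool :=
  if ∀ y ∈ Res x, f y = true then some true
  else if ∀ y ∈ Res x, f y = false then some false
  else none

/-- Number of uncertain (`u`) coordinates of `x`. -/
noncomputable def uCount {ι : Type} [Fintype ι] (x : ι → Option Bool) : ℕ :=
  (Finset.univ.filter fun i : ι => x i = none).card

/-- u-sensitivity of `f` at `x`: the number of coordinates `i` such that
changing only coordinate `i` can change the value of the hazard-free extension. -/
noncomputable def sensAt {ι : Type} [Fintype ι] (f : (ι → Bool) → Bool)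
    (x : ι → Option Bool) : ℕ :=
  (Finset.univ.filter fun i : ι => ∃ y : ι → Option Bool,
      y i ≠ x i ∧ (∀ j, j ≠ i → y j = x j) ∧ hfext f y ≠ hfext f x).card

/-- u-sensitivity of `f`. -/
noncomputable def sensU {ι : Type} [Fintype ι] [DecidableEq ι]
    (f : (ι → Bool) → Bool) : ℕ :=
  Finset.univ.sup fun x : ι → Option Bool => sensAt f x

/-- u-sensitivity of `f` restricted to inputs whose hazard-free value is `b`. -/
noncomputable def sensULevel {ι : Type} [Fintype ι] [DecidableEq ι]
    (f : (ι → Bool) → Bool) (b : Option Bool) : ℕ :=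
  (Finset.univ.filter fun x : ι → Option Bool => hfext f x = b).sup (sensAt f)

/-- Boolean sensitivity of `f` at a Boolean input `x`. -/
noncomputable def boolSensAt {ι : Type} [Fintype ι] [DecidableEq ι]
    (f : (ι → Bool) → Bool) (x : ι → Bool) : ℕ :=
  (Finset.univ.filter fun i : ι => f (Function.update x i (!x i)) ≠ f x).card

/-- Boolean sensitivity of `f`. -/
noncomputable def boolSens {ι : Type} [Fintype ι] [DecidableEq ι]
    (f : (ι → Bool) → Bool) : ℕ :=
  Finset.univ.sup (boolSensAt f)

/-- There are `k` pairwise disjoint blocks, each of which is sensitive for the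
hazard-free extension of `f` at `x`. -/
def HasSensBlocks {ι : Type} (f : (ι → Bool) → Bool) (x : ι → Option Bool)
    (k : ℕ) : Prop :=
  ∃ (B : Fin k → Set ι) (y : Fin k → ι → Option Bool),
    (∀ j j', j ≠ j' → Disjoint (B j) (B j')) ∧
    ∀ j, (∀ i, y j i ≠ x i ↔ i ∈ B j) ∧ hfext f (y j) ≠ hfext f x

/-- u-block sensitivity of `f`. -/
noncomputable def bsU {ι : Type} (f : (ι → Bool) → Bool) : ℕ :=
  sSup {k | ∃ x, HasSensBlocks f x k}

/-- A ternary string `y` is consistent with a partial assignment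
`p : ι → Option (Option Bool)` (`none` = `*`). -/
def Consistent {ι : Type} (y : ι → Option Bool) (p : ι → Option (Option Bool)) :
    Prop :=
  ∀ i v, p i = some v → y i = v

/-- `p` is a certificate for the hazard-free extension of `f` at `x`. -/
def IsCert {ι : Type} (f : (ι → Bool) → Bool) (x : ι → Option Bool)
    (p : ι → Option (Option Bool)) : Prop :=
  Consistent x p ∧ ∀ y, Consistent y p → hfext f y = hfext f x

/-- Size of a partial assignment: the number of non-`*` coordinates. -/
noncomputable def certSize {ι : Type} [Fintype ι] (p : ι → Option (Option Bool)) :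
    ℕ :=
  (Finset.univ.filter fun i : ι => p i ≠ none).card

/-- u-certificate complexity of `f` at `x`. -/
noncomputable def ccAt {ι : Type} [Fintype ι] (f : (ι → Bool) → Bool)
    (x : ι → Option Bool) : ℕ :=
  sInf {k | ∃ p, IsCert f x p ∧ certSize p = k}

/-- u-certificate complexity of `f`. -/
noncomputable def ccU {ι : Type} [Fintype ι] [DecidableEq ι]
    (f : (ι → Bool) → Bool) : ℕ :=
  Finset.univ.sup fun x : ι → Option Bool => ccAt f x

/-- u-certificate complexity of `f` restricted to inputs with hazard-free value `b`. -/
noncomputable def ccULevel {ι : Type} [Fintype ι] [DecidableEq ι]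
    (f : (ι → Bool) → Bool) (b : Option Bool) : ℕ :=
  (Finset.univ.filter fun x : ι → Option Bool => hfext f x = b).sup (ccAt f)

/-- A set of literals (at most one per variable), encoded as a partial Boolean
assignment `q : ι → Option Bool`, is an implicant of `f` if `f` is `true` on
every Boolean input extending `q`. -/
def IsImplicant {ι : Type} (f : (ι → Bool) → Bool) (q : ι → Option Bool) : Prop :=
  ∀ y : ι → Bool, (∀ i b, q i = some b → y i = b) → f y = true

/-- Dually, an implicate of `f` forces the value `false`. -/
def IsImplicate {ι : Type} (f : (ι → Bool) → Bool) (q : ι → Option Bool) : Prop :=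
  ∀ y : ι → Bool, (∀ i b, q i = some b → y i = b) → f y = false

/-- `q'` is a (literal-)subset of `q`. -/
def SubAsn {ι : Type} (q' q : ι → Option Bool) : Prop :=
  ∀ i b, q' i = some b → q i = some b

def IsPrimeImplicant {ι : Type} (f : (ι → Bool) → Bool) (q : ι → Option Bool) :
    Prop :=
  IsImplicant f q ∧ ∀ q', SubAsn q' q → q' ≠ q → ¬ IsImplicant f q'

def IsPrimeImplicate {ι : Type} (f : (ι → Bool) → Bool) (q : ι → Option Bool) :
    Prop :=
  IsImplicate f q ∧ ∀ q', SubAsn q' q → q' ≠ q → ¬ IsImplicate f q'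

/-- Number of literals of a partial assignment. -/
noncomputable def asnSize {ι : Type} [Fintype ι] (q : ι → Option Bool) : ℕ :=
  (Finset.univ.filter fun i : ι => q i ≠ none).card

/-- Ternary decision trees: internal nodes query a variable and branch on the
three possible values `0`, `u`, `1`; leaves output a value in `{0,u,1}`. -/
inductive TTree (ι : Type) : Type where
  | leaf : Option Bool → TTree ι
  | node : ι → TTree ι → TTree ι → TTree ι → TTree ι

namespace TTree

def eval {ι : Type} : TTree ι → (ι → Option Bool) → Option Bool
  | .leaf b, _ => b
  | .node i t0 tu t1, x =>
    match x i with
    | some false => eval t0 x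
    | none => eval tu x
    | some true => eval t1 x

def depth {ι : Type} : TTree ι → ℕ
  | .leaf _ => 0
  | .node _ t0 tu t1 => max (max t0.depth tu.depth) t1.depth + 1

/-- Size of a tree: its number of leaves. -/
def size {ι : Type} : TTree ι → ℕ
  | .leaf _ => 1
  | .node _ t0 tu t1 => t0.size + tu.size + t1.size

end TTree

/-- Boolean decision trees. -/
inductive BTree (ι : Type) : Type where
  | leaf : Bool → BTree ι
  | node : ι → BTree ι → BTree ι → BTree ι

namespace BTree

def eval {ι : Type} : BTree ι → (ι → Bool) → Bool
  | .leaf b, _ => b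
  | .node i t0 t1, x => if x i then eval t1 x else eval t0 x

def depth {ι : Type} : BTree ι → ℕ
  | .leaf _ => 0
  | .node _ t0 t1 => max t0.depth t1.depth + 1

/-- Size of a tree: its number of leaves. -/
def size {ι : Type} : BTree ι → ℕ
  | .leaf _ => 1
  | .node _ t0 t1 => t0.size + t1.size

end BTree

/-- Deterministic u-query complexity: minimal depth of a ternary decision tree
computing the hazard-free extension of `f`. -/
noncomputable def Du {ι : Type} (f : (ι → Bool) → Bool) : ℕ :=
  sInf {d | ∃ T : TTree ι, (∀ x, T.eval x = hfext f x) ∧ T.depth = d}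

/-- Minimal number of leaves of a ternary decision tree computing the
hazard-free extension of `f`. -/
noncomputable def sizeU {ι : Type} (f : (ι → Bool) → Bool) : ℕ :=
  sInf {s | ∃ T : TTree ι, (∀ x, T.eval x = hfext f x) ∧ T.size = s}

/-- Deterministic (Boolean) query complexity of `f`. -/
noncomputable def Dbool {ι : Type} (f : (ι → Bool) → Bool) : ℕ :=
  sInf {d | ∃ T : BTree ι, (∀ x, T.eval x = f x) ∧ T.depth = d}

/-- Minimal number of leaves of a Boolean decision tree computing `f`. -/
noncomputable def sizeBool {ι : Type} (f : (ι → Bool) → Bool) : ℕ :=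
  sInf {s | ∃ T : BTree ι, (∀ x, T.eval x = f x) ∧ T.size = s}

/-- Index type for `MUX_n`: `n` selector bits and `2^n` data bits. -/
abbrev MUXIdx (n : ℕ) := Fin n ⊕ (Fin n → Bool)

/-- The multiplexer function: output the data bit addressed by the selector bits. -/
def MUX (n : ℕ) (z : MUXIdx n → Bool) : Bool :=
  z (Sum.inr fun i => z (Sum.inl i))

/-! ### Auxiliary material for the proof -/

section Aux

/-- Canonical resolution of a ternary string. -/
def resolveTV {ι : Type} (x : ι → Option Bool) : ι → Bool := fun i => (x i).getD false

lemma resolveTV_mem {ι : Type} (x : ι → Option Bool) : resolveTV x ∈ Res x := by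
  intro i b h
  simp [resolveTV, h]

lemma hfext_eq_false {ι : Type} (f : (ι → Bool) → Bool) (x : ι → Option Bool)
    (h : ∀ y ∈ Res x, f y = false) : hfext f x = some false := by
  unfold hfext
  rw [if_neg, if_pos h]
  intro hall
  have h1 := hall _ (resolveTV_mem x)
  have h2 := h _ (resolveTV_mem x)
  simp [h2] at h1

lemma hfext_ne_false {ι : Type} (f : (ι → Bool) → Bool) (x : ι → Option Bool)
    (y : ι → Bool) (hy : y ∈ Res x) (hfy : f y = true) :
    hfext f x ≠ some false := by
  unfold hfext
  split_ifs with h1 h2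
  · simp
  · exact absurd (h2 y hy) (by simp [hfy])
  · simp

lemma hf_all_false {n : ℕ} (x : MUXIdx n → Option Bool)
    (h : ∀ w, x (Sum.inr w) = some false) :
    hfext (MUX n) x = some false :=
  hfext_eq_false _ _ (fun y hy => hy (Sum.inr fun i => y (Sum.inl i)) false (h _))

lemma hf_ne_false {n : ℕ} (x : MUXIdx n → Option Bool) (w : Fin n → Bool)
    (hs : ∀ i b, x (Sum.inl i) = some b → b = w i)
    (hw : x (Sum.inr w) ≠ some false) :
    hfext (MUX n) x ≠ some false := by
  refine hfext_ne_false _ _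
    (Sum.elim w (fun w' => (x (Sum.inr w')).getD true)) ?_ ?_
  · rintro (i | w') b hb
    · simpa using (hs i b hb).symm
    · simp [hb]
  · show MUX n _ = true
    unfold MUX
    simp only [Sum.elim_inl, Sum.elim_inr]
    rcases hxw : x (Sum.inr w) with _ | b
    · simpa [hxw] using rfl
    · rcases b with _ | _
      · exact absurd hxw hw
      · simpa [hxw] using rfl

/-- A tree querying all variables in a given list, accumulating answers. -/
def mkTree {ι : Type} [DecidableEq ι] (g : (ι → Option Bool) → Option Bool) :
    List ι → (ι → Option Bool) → TTree ι
  | [], acc => .leaf (g acc)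
  | i :: l, acc =>
      .node i (mkTree g l (Function.update acc i (some false)))
        (mkTree g l (Function.update acc i none))
        (mkTree g l (Function.update acc i (some true)))

lemma mkTree_depth {ι : Type} [DecidableEq ι] (g : (ι → Option Bool) → Option Bool) :
    ∀ (l : List ι) (acc : ι → Option Bool), (mkTree g l acc).depth = l.length := by
  intro l
  induction l with
  | nil => intro acc; simp [mkTree, TTree.depth]
  | cons i l ih => intro acc; simp [mkTree, TTree.depth, ih]

lemma mkTree_eval {ι : Type} [DecidableEq ι] (g : (ι → Option Bool) → Option Bool) :
    ∀ (l : List ι) (acc : ι → Option Bool) (x : ι → Option Bool),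
      (∀ j, j ∉ l → x j = acc j) → (mkTree g l acc).eval x = g x := by
  intro l
  induction l with
  | nil =>
    intro acc x h
    have hax : acc = x := funext fun j => (h j List.not_mem_nil).symm
    simp [mkTree, TTree.eval, hax]
  | cons i l ih =>
    intro acc x h
    have key : ∀ v, x i = v → ∀ j, j ∉ l → x j = Function.update acc i v j := by
      intro v hv j hj
      by_cases hji : j = i
      · subst hji; simp [Function.update_self, hv]
      · rw [Function.update_of_ne hji]
        refine h j ?_
        intro hc
        rcases List.mem_cons.mp hc with h' | h'
        · exact hji h'
        · exact hj h'
    rcases hxi : x i with _ | b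
    · simp only [mkTree, TTree.eval, hxi]
      exact ih _ x (key _ hxi)
    · rcases b with _ | _
      · simp only [mkTree, TTree.eval, hxi]
        exact ih _ x (key _ hxi)
      · simp only [mkTree, TTree.eval, hxi]
        exact ih _ x (key _ hxi)

/-- Two confusable inputs for the endgame adversary state. -/
lemma exists_confuse2 (n : ℕ) (w : Fin n → Bool) (A : Finset (Fin n)) (j : Fin n)
    (hjA : j ∉ A) :
    ∃ x1 x2 : MUXIdx n → Option Bool,
      ((∀ i ∈ A, x1 (Sum.inl i) = none) ∧ x1 (Sum.inr w) = none ∧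
        (∀ w', w' ≠ w → x1 (Sum.inr w') = some false)) ∧
      ((∀ i ∈ A, x2 (Sum.inl i) = none) ∧ x2 (Sum.inr w) = none ∧
        (∀ w', w' ≠ w → x2 (Sum.inr w') = some false)) ∧
      hfext (MUX n) x1 ≠ hfext (MUX n) x2 := by
  classical
  refine ⟨Sum.elim
      (fun i => if i ∈ A then none else if i = j then some (!(w j)) else some (w i))
      (fun w' => if w' = w then none else some false),
    Sum.elim (fun i => if i ∈ A then none else some (w i))
      (fun w' => if w' = w then none else some false),
    ⟨fun i hi => by simp [hi], by simp, fun w' hw' => by simp [hw']⟩,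
    ⟨fun i hi => by simp [hi], by simp, fun w' hw' => by simp [hw']⟩, ?_⟩
  have h1 : hfext (MUX n) (Sum.elim
      (fun i => if i ∈ A then none else if i = j then some (!(w j)) else some (w i))
      (fun w' => if w' = w then none else some false)) = some false := by
    apply hfext_eq_false
    intro y hy
    have hj' : y (Sum.inl j) = !(w j) := hy (Sum.inl j) _ (by simp [hjA])
    have haddr : (fun i => y (Sum.inl i)) ≠ w := by
      intro hc
      have := congrFun hc j
      rw [hj'] at this
      simp at this
    exact hy (Sum.inr (fun i => y (Sum.inl i))) false (by simp [haddr])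
  have h2 : hfext (MUX n) (Sum.elim (fun i => if i ∈ A then none else some (w i))
      (fun w' => if w' = w then none else some false)) ≠ some false := by
    apply hf_ne_false _ w
    · intro i b hb
      simp only [Sum.elim_inl] at hb
      split_ifs at hb with h
      exact (Option.some_inj.mp hb).symm
    · simp
  rw [h1]
  exact fun hc => h2 hc.symm

/-- Two confusable inputs for the main adversary state. -/
lemma exists_confuse1 (n : ℕ) (A : Finset (Fin n)) (Dq : Finset (Fin n → Bool))
    (w : Fin n → Bool) (hw : w ∉ Dq) :
    ∃ x1 x2 : MUXIdx n → Option Bool,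
      ((∀ i ∈ A, x1 (Sum.inl i) = none) ∧ (∀ w' ∈ Dq, x1 (Sum.inr w') = some false)) ∧
      ((∀ i ∈ A, x2 (Sum.inl i) = none) ∧ (∀ w' ∈ Dq, x2 (Sum.inr w') = some false)) ∧
      hfext (MUX n) x1 ≠ hfext (MUX n) x2 := by
  classical
  refine ⟨Sum.elim (fun i => if i ∈ A then none else some false) (fun _ => some false),
    Sum.elim (fun i => if i ∈ A then none else some (w i))
      (fun w' => if w' = w then some true else some false),
    ⟨fun i hi => by simp [hi], fun w' _ => by simp⟩,
    ⟨fun i hi => by simp [hi], fun w' hw' => by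
      have : w' ≠ w := fun hc => hw (hc ▸ hw')
      simp [this]⟩, ?_⟩
  have h1 : hfext (MUX n) (Sum.elim (fun i => if i ∈ A then none else some false)
      (fun _ => some false)) = some false :=
    hf_all_false _ (fun _ => rfl)
  have h2 : hfext (MUX n) (Sum.elim (fun i => if i ∈ A then none else some (w i))
      (fun w' => if w' = w then some true else some false)) ≠ some false := by
    apply hf_ne_false _ w
    · intro i b hb
      simp only [Sum.elim_inl] at hb
      split_ifs at hb with h
      exact (Option.some_inj.mp hb).symm
    · simp
  rw [h1]
  exact fun hc => h2 hc.symm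

/-- Endgame adversary lower bound: all data bits answered, one of them `u`,
the rest `0`; every unqueried selector must still be queried. -/
lemma adversary2 (n : ℕ) (w : Fin n → Bool) :
    ∀ T : TTree (MUXIdx n), ∀ A : Finset (Fin n),
      (∀ x : MUXIdx n → Option Bool,
          (∀ i ∈ A, x (Sum.inl i) = none) →
          x (Sum.inr w) = none →
          (∀ w', w' ≠ w → x (Sum.inr w') = some false) →
          T.eval x = hfext (MUX n) x) →
      Aᶜ.card ≤ T.depth := by
  intro T
  induction T with
  | leaf c =>
    intro A hT
    by_cases hA : Aᶜ.card = 0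
    · simp [hA, TTree.depth]
    · exfalso
      obtain ⟨j, hj⟩ := Finset.card_pos.mp (Nat.pos_of_ne_zero hA)
      have hjA : j ∉ A := Finset.mem_compl.mp hj
      obtain ⟨x1, x2, ⟨g11, g12, g13⟩, ⟨g21, g22, g23⟩, hne⟩ := exists_confuse2 n w A j hjA
      have e1 := hT x1 g11 g12 g13
      have e2 := hT x2 g21 g22 g23
      simp only [TTree.eval] at e1 e2
      exact hne (e1 ▸ e2 ▸ rfl)
  | node i t0 tu t1 ih0 ihu ih1 =>
    intro A hT
    have hd : (TTree.node i t0 tu t1).depth = max (max t0.depth tu.depth) t1.depth + 1 := rfl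
    have hle0 : t0.depth ≤ max (max t0.depth tu.depth) t1.depth :=
      le_trans (le_max_left _ _) (le_max_left _ _)
    have hleu : tu.depth ≤ max (max t0.depth tu.depth) t1.depth :=
      le_trans (le_max_right _ _) (le_max_left _ _)
    match i with
    | Sum.inl j =>
      by_cases hj : j ∈ A
      · have h := ihu A (fun x h1 h2 h3 => by
          have hx : x (Sum.inl j) = none := h1 j hj
          have := hT x h1 h2 h3
          simpa [TTree.eval, hx] using this)
        omega
      · have h := ihu (insert j A) (fun x h1 h2 h3 => by
          have hx : x (Sum.inl j) = none := h1 j (Finset.mem_insert_self j A)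
          have := hT x (fun i hi => h1 i (Finset.mem_insert_of_mem hi)) h2 h3
          simpa [TTree.eval, hx] using this)
        have hcard : ((insert j A)ᶜ).card = Aᶜ.card - 1 := by
          rw [Finset.compl_insert, Finset.card_erase_of_mem (Finset.mem_compl.mpr hj)]
        have hpos : 0 < Aᶜ.card := Finset.card_pos.mpr ⟨j, Finset.mem_compl.mpr hj⟩
        omega
    | Sum.inr w' =>
      by_cases hw' : w' = w
      · subst hw'
        have h := ihu A (fun x h1 h2 h3 => by
          have := hT x h1 h2 h3
          simpa [TTree.eval, h2] using this)
        omega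
      · have h := ih0 A (fun x h1 h2 h3 => by
          have hx := h3 w' hw'
          have := hT x h1 h2 h3
          simpa [TTree.eval, hx] using this)
        omega

/-- Main adversary lower bound. -/
lemma adversary1 (n : ℕ) :
    ∀ T : TTree (MUXIdx n), ∀ (A : Finset (Fin n)) (Dq : Finset (Fin n → Bool)),
      Dqᶜ.Nonempty →
      (∀ x : MUXIdx n → Option Bool,
          (∀ i ∈ A, x (Sum.inl i) = none) →
          (∀ w ∈ Dq, x (Sum.inr w) = some false) →
          T.eval x = hfext (MUX n) x) →
      Aᶜ.card + Dqᶜ.card ≤ T.depth := by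
  intro T
  induction T with
  | leaf c =>
    intro A Dq hDq hT
    exfalso
    obtain ⟨w, hw⟩ := hDq
    have hwDq : w ∉ Dq := Finset.mem_compl.mp hw
    obtain ⟨x1, x2, ⟨g11, g12⟩, ⟨g21, g22⟩, hne⟩ := exists_confuse1 n A Dq w hwDq
    have e1 := hT x1 g11 g12
    have e2 := hT x2 g21 g22
    simp only [TTree.eval] at e1 e2
    exact hne (e1 ▸ e2 ▸ rfl)
  | node i t0 tu t1 ih0 ihu ih1 =>
    intro A Dq hDq hT
    have hd : (TTree.node i t0 tu t1).depth = max (max t0.depth tu.depth) t1.depth + 1 := rfl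
    have hle0 : t0.depth ≤ max (max t0.depth tu.depth) t1.depth :=
      le_trans (le_max_left _ _) (le_max_left _ _)
    have hleu : tu.depth ≤ max (max t0.depth tu.depth) t1.depth :=
      le_trans (le_max_right _ _) (le_max_left _ _)
    match i with
    | Sum.inl j =>
      by_cases hj : j ∈ A
      · have h := ihu A Dq hDq (fun x h1 h2 => by
          have hx : x (Sum.inl j) = none := h1 j hj
          have := hT x h1 h2
          simpa [TTree.eval, hx] using this)
        omega
      · have h := ihu (insert j A) Dq hDq (fun x h1 h2 => by
          have hx : x (Sum.inl j) = none := h1 j (Finset.mem_insert_self j A)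
          have := hT x (fun i hi => h1 i (Finset.mem_insert_of_mem hi)) h2
          simpa [TTree.eval, hx] using this)
        have hcard : ((insert j A)ᶜ).card = Aᶜ.card - 1 := by
          rw [Finset.compl_insert, Finset.card_erase_of_mem (Finset.mem_compl.mpr hj)]
        have hpos : 0 < Aᶜ.card := Finset.card_pos.mpr ⟨j, Finset.mem_compl.mpr hj⟩
        omega
    | Sum.inr w =>
      by_cases hw : w ∈ Dq
      · have h := ih0 A Dq hDq (fun x h1 h2 => by
          have hx : x (Sum.inr w) = some false := h2 w hw
          have := hT x h1 h2
          simpa [TTree.eval, hx] using this)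
        omega
      · by_cases hins : ((insert w Dq)ᶜ).Nonempty
        · have h := ih0 A (insert w Dq) hins (fun x h1 h2 => by
            have hx : x (Sum.inr w) = some false := h2 w (Finset.mem_insert_self w Dq)
            have := hT x h1 (fun w' hw' => h2 w' (Finset.mem_insert_of_mem hw'))
            simpa [TTree.eval, hx] using this)
          have hcard : ((insert w Dq)ᶜ).card = Dqᶜ.card - 1 := by
            rw [Finset.compl_insert, Finset.card_erase_of_mem (Finset.mem_compl.mpr hw)]
          have hpos : 0 < Dqᶜ.card := Finset.card_pos.mpr ⟨w, Finset.mem_compl.mpr hw⟩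
          omega
        · have hempty : ((insert w Dq)ᶜ) = ∅ := Finset.not_nonempty_iff_eq_empty.mp hins
          have hcard1 : Dqᶜ.card = 1 := by
            have h1 : (Dqᶜ.erase w).card = 0 := by
              rw [← Finset.compl_insert, hempty]; rfl
            rw [Finset.card_erase_of_mem (Finset.mem_compl.mpr hw)] at h1
            have hpos : 0 < Dqᶜ.card := Finset.card_pos.mpr ⟨w, Finset.mem_compl.mpr hw⟩
            omega
          have h := adversary2 n w tu A (fun x h1 h2 h3 => by
            have := hT x h1 (fun w' hw' => h3 w' (fun hc => hw (hc ▸ hw')))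
            simpa [TTree.eval, h2] using this)
          omega

end Aux

/-- The deterministic u-query complexity of `MUX_n` is exactly `2^n + n`. -/
theorem stmt11 (n : ℕ) (hn : 1 ≤ n) :
    Du (MUX n) = 2^n + n := by
  classical
  have hfun : Fintype.card (Fin n → Bool) = 2 ^ n := by
    simp [Fintype.card_fun]
  have hcard : Fintype.card (MUXIdx n) = 2 ^ n + n := by
    rw [Fintype.card_sum, hfun, Fintype.card_fin]
    omega
  have treemem : (2 ^ n + n) ∈
      {d | ∃ T : TTree (MUXIdx n), (∀ x, T.eval x = hfext (MUX n) x) ∧ T.depth = d} := by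
    refine ⟨mkTree (hfext (MUX n)) (Finset.univ.toList) (fun _ => none), fun x => ?_, ?_⟩
    · exact mkTree_eval _ _ _ _
        (fun j hj => absurd (Finset.mem_toList.mpr (Finset.mem_univ j)) hj)
    · rw [mkTree_depth, Finset.length_toList, Finset.card_univ, hcard]
  refine le_antisymm (Nat.sInf_le treemem) (le_csInf ⟨_, treemem⟩ ?_)
  rintro d ⟨T, hT, rfl⟩
  have key := adversary1 n T ∅ ∅ (by simp) (fun x _ _ => hT x)
  simp only [Finset.compl_empty, Finset.card_univ, Fintype.card_fin, hfun] at key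
  omega
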